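/- Let f : [0,1] → ℝ be C² with |f''| ≤ K. Then the Fourier–Legendre series Σ_{i=0}^∞ c_i φ_i with c_i = ∫₀¹ f φ_i converges to f uniformly on [0,1]. -/

import Mathlib

open Filter

/-- The Legendre polynomials, via the three-term recurrence. -/
noncomputable def legendreP : ℕ → ℝ → ℝ
  | 0, _ => 1
  | 1, x => x
  | n + 2, x =>
      ((2 * (n : ℝ) + 3) * x * legendreP (n + 1) x - ((n : ℝ) + 1) * legendreP n x) /
        ((n : ℝ) + 2)

/-- The Legendre scaling functions on `[0,1]`. -/
noncomputable def legendreScaling (i : ℕ) (x : ℝ) : ℝ :=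
  Real.sqrt (2 * i + 1) * legendreP i (2 * x - 1)

/-- The `n`-th partial Fourier sum with respect to the Legendre scaling functions. -/
noncomputable def legendrePartialSum (n : ℕ) (f : ℝ → ℝ) (x : ℝ) : ℝ :=
  ∑ i ∈ Finset.range n, (∫ t in (0:ℝ)..1, f t * legendreScaling i t) * legendreScaling i x

open Polynomial Topology

noncomputable def legL : ℕ → Polynomial ℝ
  | 0 => 1
  | 1 => X
  | n + 2 => C ((2*(n:ℝ)+3)/((n:ℝ)+2)) * (X * legL (n+1)) - C (((n:ℝ)+1)/((n:ℝ)+2)) * legL n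

lemma legL_rec (n : ℕ) : C ((n:ℝ)+2) * legL (n+2)
    = C (2*(n:ℝ)+3) * (X * legL (n+1)) - C ((n:ℝ)+1) * legL n := by
  have h2 : (n:ℝ)+2 ≠ 0 := by positivity
  show C ((n:ℝ)+2) * (C ((2*(n:ℝ)+3)/((n:ℝ)+2)) * (X * legL (n+1))
      - C (((n:ℝ)+1)/((n:ℝ)+2)) * legL n) = _
  rw [mul_sub]
  congr 1
  · rw [← mul_assoc, ← C_mul, mul_div_cancel₀ _ h2]
  · rw [← mul_assoc, ← C_mul, mul_div_cancel₀ _ h2]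

lemma legendreP_eval (n : ℕ) (x : ℝ) : legendreP n x = (legL n).eval x := by
  induction n using Nat.strong_induction_on with
  | _ n ih =>
    match n with
    | 0 => simp [legendreP, legL]
    | 1 => simp [legendreP, legL]
    | n + 2 =>
      have h2 : (n:ℝ)+2 ≠ 0 := by positivity
      simp only [legendreP, legL, eval_sub, eval_mul, eval_C, eval_X,
        ih (n+1) (by omega), ih n (by omega)]
      field_simp

/-- The two derivative identities, proved simultaneously. -/
lemma legL_BC (n : ℕ) :
    derivative (legL (n+1)) = X * derivative (legL n) + C ((n:ℝ)+1) * legL n ∧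
    X * derivative (legL (n+1)) = derivative (legL n) + C ((n:ℝ)+1) * legL (n+1) := by
  induction n with
  | zero => constructor <;> simp [legL]
  | succ n ih =>
    obtain ⟨hB, hC⟩ := ih
    have h2 : ((n:ℝ)+2) ≠ 0 := by positivity
    have hC2 : (C ((n:ℝ)+2) : Polynomial ℝ) ≠ 0 := Polynomial.C_ne_zero.mpr h2
    have hrec := legL_rec n
    have hder : C ((n:ℝ)+2) * derivative (legL (n+2))
        = C (2*(n:ℝ)+3) * (legL (n+1) + X * derivative (legL (n+1)))
          - C ((n:ℝ)+1) * derivative (legL n) := by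
      have := congrArg derivative hrec
      simpa [derivative_mul, mul_add] using this
    have hP : (X^2 - 1) * derivative (legL (n+1))
        = C ((n:ℝ)+1) * (X * legL (n+1) - legL n) := by
      linear_combination X * hC - hB
    have hB' : C ((n:ℝ)+2) * derivative (legL (n+2))
        = C ((n:ℝ)+2) * (X * derivative (legL (n+1)) + C ((n:ℝ)+2) * legL (n+1)) := by
      simp only [C_add, C_mul, map_ofNat, C_1] at hder hC ⊢
      linear_combination hder + ((C (n:ℝ) : Polynomial ℝ) + 1) * hC
    have hBc : derivative (legL (n+2))
        = X * derivative (legL (n+1)) + C ((n:ℝ)+2) * legL (n+1) :=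
      mul_left_cancel₀ hC2 hB'
    refine ⟨by exact_mod_cast hBc, ?_⟩
    have hC' : C ((n:ℝ)+2) * (X * derivative (legL (n+2)))
        = C ((n:ℝ)+2) * (derivative (legL (n+1)) + C ((n:ℝ)+2) * legL (n+2)) := by
      simp only [C_add, C_mul, map_ofNat, C_1] at hB' hrec hP ⊢
      linear_combination X * hB' - ((C (n:ℝ) : Polynomial ℝ) + 2) * hrec
        + ((C (n:ℝ) : Polynomial ℝ) + 2) * hP
    have := mul_left_cancel₀ hC2 hC'
    exact_mod_cast this


lemma legL_B (n : ℕ) :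
    derivative (legL (n+1)) = X * derivative (legL n) + C ((n:ℝ)+1) * legL n := (legL_BC n).1

lemma legL_C (n : ℕ) :
    X * derivative (legL (n+1)) = derivative (legL n) + C ((n:ℝ)+1) * legL (n+1) := (legL_BC n).2

/-- The Legendre ODE in polynomial form. -/
lemma legL_ODE (n : ℕ) :
    derivative ((1 - X^2) * derivative (legL n)) = C (-((n:ℝ)*((n:ℝ)+1))) * legL n := by
  cases n with
  | zero => simp [legL]
  | succ n =>
    have hB := legL_B n
    have hC := legL_C n
    have hP : (1 - X^2) * derivative (legL (n+1))
        = C ((n:ℝ)+1) * (legL n - X * legL (n+1)) := by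
      linear_combination hB - X * hC
    rw [hP]
    have : derivative (C ((n:ℝ)+1) * (legL n - X * legL (n+1)))
        = C ((n:ℝ)+1) * (derivative (legL n) - legL (n+1) - X * derivative (legL (n+1))) := by
      simp [derivative_mul, mul_sub]
      ring
    rw [this]
    push_cast at hC ⊢
    simp only [C_add, C_mul, C_neg, C_1, map_ofNat, Nat.cast_ofNat] at hC ⊢
    linear_combination (-(C (n:ℝ) : Polynomial ℝ) - 1) * hC

lemma legL_eval_one (n : ℕ) : (legL n).eval 1 = 1 := by
  induction n using Nat.strong_induction_on with
  | _ n ih =>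
    match n with
    | 0 => simp [legL]
    | 1 => simp [legL]
    | n + 2 =>
      have h2 : (n:ℝ)+2 ≠ 0 := by positivity
      simp only [legL, eval_sub, eval_mul, eval_C, eval_X, ih (n+1) (by omega), ih n (by omega)]
      field_simp
      ring

lemma legL_eval_neg_one (n : ℕ) : (legL n).eval (-1) = (-1)^n := by
  induction n using Nat.strong_induction_on with
  | _ n ih =>
    match n with
    | 0 => simp [legL]
    | 1 => simp [legL]
    | n + 2 =>
      have h2 : (n:ℝ)+2 ≠ 0 := by positivity
      simp only [legL, eval_sub, eval_mul, eval_C, eval_X, ih (n+1) (by omega), ih n (by omega)]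
      field_simp
      ring

/-- The Lyapunov-type identity used to bound Legendre polynomials. -/
lemma legL_W (n : ℕ) :
    derivative (C ((n:ℝ)*((n:ℝ)+1)) * (legL n)^2 + (1 - X^2) * (derivative (legL n))^2)
      = 2 * X * (derivative (legL n))^2 := by
  have hODE := legL_ODE n
  have h1 : (1 - X^2) * derivative (derivative (legL n))
      = C (-((n:ℝ)*((n:ℝ)+1))) * legL n + 2 * X * derivative (legL n) := by
    have h2 : derivative ((1 - X^2) * derivative (legL n))
        = (1 - X^2) * derivative (derivative (legL n)) - 2 * X * derivative (legL n) := by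
      simp only [derivative_mul, derivative_sub, derivative_one, derivative_pow, derivative_X,
        Nat.cast_ofNat, map_ofNat]
      ring
    linear_combination hODE - h2
  simp only [derivative_add, derivative_mul, derivative_pow, derivative_C, derivative_X,
    derivative_one, derivative_sub, C_neg, Nat.cast_ofNat, map_ofNat] at h1 ⊢
  linear_combination 2 * derivative (legL n) * h1


lemma legL_coeff_deg (n : ℕ) : 0 < (legL n).coeff n ∧ (legL n).natDegree = n := by
  induction n using Nat.strong_induction_on with
  | _ n ih =>
    match n with
    | 0 => simp [legL]
    | 1 => simp [legL]
    | n + 2 =>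
      obtain ⟨hc1, hd1⟩ := ih (n+1) (by omega)
      obtain ⟨hc0, hd0⟩ := ih n (by omega)
      have ha : 0 < (2*(n:ℝ)+3)/((n:ℝ)+2) := by positivity
      have hXL : (X * legL (n+1)).coeff (n+2) = (legL (n+1)).coeff (n+1) := coeff_X_mul _ _
      have hcoeff : (legL (n+2)).coeff (n+2)
          = (2*(n:ℝ)+3)/((n:ℝ)+2) * (legL (n+1)).coeff (n+1) := by
        show (C ((2*(n:ℝ)+3)/((n:ℝ)+2)) * (X * legL (n+1))
            - C (((n:ℝ)+1)/((n:ℝ)+2)) * legL n).coeff (n+2) = _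
        rw [coeff_sub, coeff_C_mul, coeff_C_mul, hXL,
          coeff_eq_zero_of_natDegree_lt (by omega : (legL n).natDegree < n+2)]
        ring
      have hpos : 0 < (legL (n+2)).coeff (n+2) := by
        rw [hcoeff]; positivity
      refine ⟨hpos, le_antisymm ?_ (le_natDegree_of_ne_zero hpos.ne')⟩
      show (C ((2*(n:ℝ)+3)/((n:ℝ)+2)) * (X * legL (n+1))
          - C (((n:ℝ)+1)/((n:ℝ)+2)) * legL n).natDegree ≤ n+2
      refine le_trans (natDegree_sub_le _ _) (max_le ?_ ?_)
      · refine le_trans (natDegree_C_mul_le _ _) ?_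
        refine le_trans (natDegree_mul_le) ?_
        simp only [natDegree_X, hd1]
        omega
      · exact le_trans (natDegree_C_mul_le _ _) (by omega)

lemma legL_eval_abs_le (n : ℕ) {x : ℝ} (hx : x ∈ Set.Icc (-1:ℝ) 1) :
    |(legL n).eval x| ≤ 1 := by
  cases n with
  | zero => simp [legL]
  | succ n =>
    set m := n + 1
    have ha : 0 < ((m:ℝ)*((m:ℝ)+1)) := by positivity
    set W : Polynomial ℝ := C ((m:ℝ)*((m:ℝ)+1)) * (legL m)^2 + (1 - X^2) * (derivative (legL m))^2
      with hWdef
    set v : ℝ → ℝ := fun y => W.eval y with hvdef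
    have hderiv : ∀ y : ℝ, HasDerivAt v (2 * y * ((derivative (legL m)).eval y)^2) y := by
      intro y
      have h := W.hasDerivAt y
      rwa [legL_W m, show (2 * X * (derivative (legL m))^2 : Polynomial ℝ).eval y
        = 2 * y * ((derivative (legL m)).eval y)^2 by simp [eval_mul, eval_pow]] at h
    have hcont : Continuous v := W.continuous_aeval
    have hanti : AntitoneOn v (Set.Icc (-1:ℝ) 0) := by
      apply antitoneOn_of_deriv_nonpos (convex_Icc _ _) hcont.continuousOn
      · intro y hy
        exact (hderiv y).differentiableAt.differentiableWithinAt
      · intro y hy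
        rw [(hderiv y).deriv]
        rw [interior_Icc] at hy
        have : y < 0 := hy.2
        nlinarith [sq_nonneg ((derivative (legL m)).eval y)]
    have hmono : MonotoneOn v (Set.Icc (0:ℝ) 1) := by
      apply monotoneOn_of_deriv_nonneg (convex_Icc _ _) hcont.continuousOn
      · intro y hy
        exact (hderiv y).differentiableAt.differentiableWithinAt
      · intro y hy
        rw [(hderiv y).deriv]
        rw [interior_Icc] at hy
        have : 0 < y := hy.1
        positivity
    have hv1 : v 1 = (m:ℝ)*((m:ℝ)+1) := by
      simp [hvdef, hWdef, eval_add, eval_mul, eval_pow, legL_eval_one]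
    have hvm1 : v (-1) = (m:ℝ)*((m:ℝ)+1) := by
      have : ((-1:ℝ)^m)^2 = 1 := by
        rw [← pow_mul, mul_comm, pow_mul, neg_one_sq, one_pow]
      simp [hvdef, hWdef, eval_add, eval_mul, eval_pow, legL_eval_neg_one, this]
    have hvx : v x ≤ (m:ℝ)*((m:ℝ)+1) := by
      rcases le_total x 0 with h0 | h0
      · have := hanti (Set.mem_Icc.mpr ⟨le_refl _, by norm_num⟩) (Set.mem_Icc.mpr ⟨hx.1, h0⟩)
          hx.1
        rw [hvm1] at this
        exact this
      · have := hmono (Set.mem_Icc.mpr ⟨h0, hx.2⟩) (Set.mem_Icc.mpr ⟨by norm_num, le_refl _⟩)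
          hx.2
        rw [hv1] at this
        exact this
    have hlow : (m:ℝ)*((m:ℝ)+1) * ((legL m).eval x)^2 ≤ v x := by
      have h1 : 0 ≤ (1 - x^2) * ((derivative (legL m)).eval x)^2 := by
        have : x^2 ≤ 1 := by nlinarith [hx.1, hx.2]
        nlinarith [sq_nonneg ((derivative (legL m)).eval x)]
      simp only [hvdef, hWdef, eval_add, eval_mul, eval_pow, eval_C, eval_sub, eval_one, eval_X]
      nlinarith
    have hsq : ((legL m).eval x)^2 ≤ 1 := by
      nlinarith
    rw [abs_le]
    constructor <;> nlinarith


noncomputable def legI (p : Polynomial ℝ) : ℝ := ∫ x in (-1:ℝ)..1, p.eval x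

lemma poly_intervalIntegrable (p : Polynomial ℝ) (a b : ℝ) :
    IntervalIntegrable (fun x => p.eval x) MeasureTheory.volume a b :=
  p.continuous_aeval.intervalIntegrable _ _

lemma legI_C_mul (c : ℝ) (p : Polynomial ℝ) : legI (C c * p) = c * legI p := by
  simp only [legI, eval_mul, eval_C]
  exact intervalIntegral.integral_const_mul _ _

lemma legI_sub (p q : Polynomial ℝ) : legI (p - q) = legI p - legI q := by
  simp only [legI, eval_sub]
  exact intervalIntegral.integral_sub (poly_intervalIntegrable p _ _) (poly_intervalIntegrable q _ _)

lemma legI_derivative (p : Polynomial ℝ) : legI (derivative p) = p.eval 1 - p.eval (-1) :=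
  intervalIntegral.integral_eq_sub_of_hasDerivAt (fun x _ => p.hasDerivAt x)
    (poly_intervalIntegrable _ _ _)

lemma legL_orth {n m : ℕ} (hnm : n ≠ m) : legI (legL n * legL m) = 0 := by
  have hcd : (m:ℝ)*((m:ℝ)+1) - (n:ℝ)*((n:ℝ)+1) ≠ 0 := by
    rcases hnm.lt_or_gt with hlt | hlt
    · have h : (n:ℝ) < m := by exact_mod_cast hlt
      have hn : (0:ℝ) ≤ n := Nat.cast_nonneg n
      nlinarith
    · have h : (m:ℝ) < n := by exact_mod_cast hlt
      have hn : (0:ℝ) ≤ m := Nat.cast_nonneg m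
      nlinarith
  have hS : derivative (((1 - X^2) * derivative (legL n)) * legL m
        - legL n * ((1 - X^2) * derivative (legL m)))
      = C ((m:ℝ)*((m:ℝ)+1) - (n:ℝ)*((n:ℝ)+1)) * (legL n * legL m) := by
    rw [derivative_sub, derivative_mul, legL_ODE n, derivative_mul, legL_ODE m]
    simp only [C_sub, C_mul, C_neg]
    ring
  have h0 := legI_derivative (((1 - X^2) * derivative (legL n)) * legL m
      - legL n * ((1 - X^2) * derivative (legL m)))
  rw [hS, legI_C_mul] at h0
  norm_num [eval_sub, eval_mul, eval_pow] at h0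
  rcases h0 with h0 | h0
  · exact absurd h0 hcd
  · exact h0

lemma legL_norm (n : ℕ) : legI (legL n * legL n) = 2/(2*(n:ℝ)+1) := by
  induction n using Nat.strong_induction_on with
  | _ n ih =>
    match n with
    | 0 =>
      norm_num [legI, legL]
    | 1 =>
      have h : legI (legL 1 * legL 1) = ∫ x in (-1:ℝ)..1, x^2 := by
        simp [legI, legL, sq]
      rw [h, integral_pow]
      norm_num
    | n + 2 =>
      have h1 := congrArg (fun p : Polynomial ℝ => legI (p * legL (n+2))) (legL_rec n)
      have h2 := congrArg (fun p : Polynomial ℝ => legI (p * legL (n+1))) (legL_rec (n+1))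
      simp only [sub_mul, mul_assoc, legI_sub, legI_C_mul] at h1 h2
      push_cast at h1 h2
      have o1 : legI (legL n * legL (n+2)) = 0 := legL_orth (by omega)
      have o2 : legI (legL (n+1+2) * legL (n+1)) = 0 := legL_orth (by omega)
      have ihn : legI (legL (n+1) * legL (n+1)) = 2/(2*(n:ℝ)+3) := by
        have h := ih (n+1) (by omega)
        push_cast at h
        rw [h]; ring_nf
      have hcomm : legI (X * (legL (n+1) * legL (n+2))) = legI (X * (legL (n+2) * legL (n+1))) := by
        rw [mul_comm (legL (n+1)) (legL (n+2))]
      rw [o1, hcomm] at h1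
      rw [o2, ihn] at h2
      have h35 : (2*(n:ℝ)+3) ≠ 0 := by positivity
      have h55 : (2*(n:ℝ)+5) ≠ 0 := by positivity
      have h22 : ((n:ℝ)+2) ≠ 0 := by positivity
      have hA : legI (X * (legL (n+2) * legL (n+1))) = 2*((n:ℝ)+2)/((2*(n:ℝ)+5)*(2*(n:ℝ)+3)) := by
        field_simp at h2 ⊢
        linarith
      rw [hA] at h1
      push_cast
      have key : (((n:ℝ)+2) * (2*(n:ℝ)+3)) * (legI (legL (n+2) * legL (n+2)) * (2*(n:ℝ)+5))
          = (((n:ℝ)+2) * (2*(n:ℝ)+3)) * 2 := by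
        field_simp at h1
        linear_combination (2*(n:ℝ)+3) * h1
      have hN := mul_left_cancel₀
        (by positivity : (((n:ℝ)+2) * (2*(n:ℝ)+3)) ≠ 0) key
      rw [eq_div_iff (by positivity : (2*((n:ℝ)+2)+1) ≠ 0)]
      linear_combination hN

lemma integral01_eval (p : Polynomial ℝ) :
    ∫ t in (0:ℝ)..1, p.eval (2*t-1) = (1/2) * legI p := by
  have h := intervalIntegral.integral_comp_mul_add (a := (0:ℝ)) (b := 1)
    (fun x => p.eval x) (two_ne_zero) (-1)
  simp only [smul_eq_mul] at h
  norm_num at h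
  rw [show (fun t : ℝ => p.eval (2*t-1)) = fun t : ℝ => p.eval (2*t + -1) from by
    funext t; ring_nf] at *
  rw [h]
  norm_num [legI]

lemma scaling_eq (i : ℕ) (t : ℝ) :
    legendreScaling i t = Real.sqrt (2*(i:ℝ)+1) * (legL i).eval (2*t-1) := by
  rw [legendreScaling, legendreP_eval]

lemma scaling_continuous (i : ℕ) : Continuous (legendreScaling i) := by
  have : legendreScaling i = fun t => Real.sqrt (2*(i:ℝ)+1) * (legL i).eval (2*t-1) := by
    funext t; exact scaling_eq i t
  rw [this]
  exact continuous_const.mul ((legL i).continuous_aeval.comp (by continuity))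

lemma scaling_orthonormal (i j : ℕ) :
    ∫ t in (0:ℝ)..1, legendreScaling i t * legendreScaling j t
      = if i = j then 1 else 0 := by
  have hs : ∀ t : ℝ, legendreScaling i t * legendreScaling j t
      = (Real.sqrt (2*(i:ℝ)+1) * Real.sqrt (2*(j:ℝ)+1)) * (legL i * legL j).eval (2*t-1) := by
    intro t
    rw [scaling_eq, scaling_eq, eval_mul]
    ring
  simp only [hs]
  rw [intervalIntegral.integral_const_mul, integral01_eval]
  by_cases hij : i = j
  · subst hij
    rw [if_pos rfl]
    rw [legL_norm i, Real.mul_self_sqrt (by positivity)]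
    field_simp
  · rw [legL_orth hij, if_neg hij]
    ring

lemma scaling_bound (i : ℕ) {t : ℝ} (ht : t ∈ Set.Icc (0:ℝ) 1) :
    |legendreScaling i t| ≤ Real.sqrt (2*(i:ℝ)+1) := by
  rw [scaling_eq, abs_mul, abs_of_nonneg (Real.sqrt_nonneg _)]
  have h1 : |(legL i).eval (2*t-1)| ≤ 1 := by
    apply legL_eval_abs_le
    constructor <;> [linarith [ht.1]; linarith [ht.2]]
  nlinarith [Real.sqrt_nonneg (2*(i:ℝ)+1)]


lemma coeff_bound (f : ℝ → ℝ) (hf : ContDiff ℝ 2 f) :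
    ∃ M : ℝ, 0 ≤ M ∧ ∀ i : ℕ, 1 ≤ i →
      |∫ t in (0:ℝ)..1, f t * legendreScaling i t| ≤ M / ((i:ℝ)*((i:ℝ)+1)) := by
  have hf' : ContDiff ℝ (1+1) f := by
    convert hf using 1
    norm_num
  have hf1 : Differentiable ℝ f := hf.differentiable (by norm_num)
  have hfd1 : ContDiff ℝ 1 (deriv f) := (contDiff_succ_iff_deriv.mp hf').2.2
  have hf2 : Differentiable ℝ (deriv f) := (contDiff_one_iff_deriv.mp hfd1).1
  have hf''c : Continuous (deriv (deriv f)) := (contDiff_one_iff_deriv.mp hfd1).2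
  have hf'c : Continuous (deriv f) := hf2.continuous
  have hfc : Continuous f := hf1.continuous
  set G : ℝ → ℝ := fun t => deriv (deriv f) t * (t*(1-t)) + deriv f t * (1-2*t) with hGdef
  have hGc : Continuous G := (hf''c.mul (by continuity)).add (hf'c.mul (by continuity))
  refine ⟨Real.sqrt (∫ t in (0:ℝ)..1, (G t)^2), Real.sqrt_nonneg _, ?_⟩
  intro i hi
  set s : ℝ := Real.sqrt (2*(i:ℝ)+1) with hsdef
  set a : ℝ := (i:ℝ)*((i:ℝ)+1) with hadef
  have hi1 : (1:ℝ) ≤ (i:ℝ) := by exact_mod_cast hi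
  have ha : 0 < a := by nlinarith
  have hφc := scaling_continuous i
  have hu : ∀ t : ℝ, HasDerivAt (legendreScaling i)
      (s * 2 * (derivative (legL i)).eval (2*t-1)) t := by
    intro t
    have hin : HasDerivAt (fun t : ℝ => 2*t-1) 2 t := by
      simpa using ((hasDerivAt_id t).const_mul 2).sub_const 1
    have houter := ((legL i).hasDerivAt (2*t-1)).comp t hin
    have h3 : HasDerivAt (fun t : ℝ => s * (legL i).eval (2*t-1))
        (s * ((derivative (legL i)).eval (2*t-1) * 2)) t := houter.const_mul s
    have heq : (fun t : ℝ => s * (legL i).eval (2*t-1)) = legendreScaling i := by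
      funext x; rw [scaling_eq]
    rw [heq] at h3
    convert h3 using 1
    ring
  set q : ℝ → ℝ := fun t => (s/2) * ((1 - X^2) * derivative (legL i)).eval (2*t-1) with hqdef
  have hq0 : q 0 = 0 := by norm_num [hqdef, eval_mul, eval_sub, eval_pow, eval_one]
  have hq1 : q 1 = 0 := by norm_num [hqdef, eval_mul, eval_sub, eval_pow, eval_one]
  have hq : ∀ t : ℝ, HasDerivAt q (-a * legendreScaling i t) t := by
    intro t
    have hin : HasDerivAt (fun t : ℝ => 2*t-1) 2 t := by
      simpa using ((hasDerivAt_id t).const_mul 2).sub_const 1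
    have houter := (((1 - X^2) * derivative (legL i)).hasDerivAt (2*t-1)).comp t hin
    have h2 := houter.const_mul (s/2)
    rw [legL_ODE i] at h2
    refine h2.congr_deriv ?_
    rw [scaling_eq, eval_mul, eval_C, hadef]
    ring
  have hqc : Continuous q :=
    continuous_const.mul (((1 - X^2) * derivative (legL i)).continuous_aeval.comp (by continuity))
  have hqw : ∀ t : ℝ, q t = (t*(1-t)) * (s * 2 * (derivative (legL i)).eval (2*t-1)) := by
    intro t
    rw [hqdef]
    simp only [eval_mul, eval_sub, eval_pow, eval_one, eval_X]
    ring
  have ibp1 := intervalIntegral.integral_mul_deriv_eq_deriv_mul (a := (0:ℝ)) (b := 1)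
    (u := f) (v := q) (u' := deriv f) (v' := fun t => -a * legendreScaling i t)
    (fun x _ => (hf1 x).hasDerivAt) (fun x _ => hq x)
    (hf'c.intervalIntegrable _ _)
    ((continuous_const.mul hφc).intervalIntegrable _ _)
  rw [hq0, hq1] at ibp1
  simp only [mul_zero, sub_self, zero_sub] at ibp1
  have hwd : ∀ t : ℝ, HasDerivAt (fun t : ℝ => deriv f t * (t*(1-t))) (G t) t := by
    intro t
    have h1 : HasDerivAt (fun t : ℝ => t*(1-t)) (1-2*t) t := by
      have h0 := (hasDerivAt_id t).mul ((hasDerivAt_const t (1:ℝ)).sub (hasDerivAt_id t))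
      refine HasDerivAt.congr_deriv (f := fun t : ℝ => t*(1-t)) h0 ?_
      simp only [Pi.sub_apply, id_eq]
      ring
    exact ((hf2 t).hasDerivAt).mul h1
  have hDc : Continuous (fun t : ℝ => s * 2 * (derivative (legL i)).eval (2*t-1)) :=
    continuous_const.mul ((derivative (legL i)).continuous_aeval.comp (by continuity))
  have ibp2 := intervalIntegral.integral_mul_deriv_eq_deriv_mul (a := (0:ℝ)) (b := 1)
    (u := fun t => deriv f t * (t*(1-t))) (v := legendreScaling i)
    (u' := G) (v' := fun t => s * 2 * (derivative (legL i)).eval (2*t-1))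
    (fun x _ => hwd x) (fun x _ => hu x)
    (hGc.intervalIntegrable _ _)
    (hDc.intervalIntegrable _ _)
  norm_num at ibp2
  set B : ℝ := ∫ t in (0:ℝ)..1, G t * legendreScaling i t with hBdef
  have e2 : ∫ t in (0:ℝ)..1, deriv f t * q t
      = ∫ t in (0:ℝ)..1, (deriv f t * (t*(1-t))) * (s * 2 * (derivative (legL i)).eval (2*t-1)) := by
    apply intervalIntegral.integral_congr
    intro t _
    simp only [hqw]
    ring
  have e1 : ∫ t in (0:ℝ)..1, f t * (-a * legendreScaling i t)
      = -a * ∫ t in (0:ℝ)..1, f t * legendreScaling i t := by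
    rw [← intervalIntegral.integral_const_mul]
    apply intervalIntegral.integral_congr
    intro t _
    ring
  have hc : -a * (∫ t in (0:ℝ)..1, f t * legendreScaling i t) = B := by
    rw [← e1, ibp1, e2, ibp2]
    ring
  -- Cauchy-Schwarz
  have hG2int : IntervalIntegrable (fun t => (G t)^2) MeasureTheory.volume 0 1 :=
    (hGc.pow 2).intervalIntegrable _ _
  have hGφint : IntervalIntegrable (fun t => G t * legendreScaling i t)
      MeasureTheory.volume 0 1 := (hGc.mul hφc).intervalIntegrable _ _
  have hφφint : IntervalIntegrable (fun t => legendreScaling i t * legendreScaling i t)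
      MeasureTheory.volume 0 1 := (hφc.mul hφc).intervalIntegrable _ _
  have hnn : 0 ≤ ∫ t in (0:ℝ)..1, (G t - B * legendreScaling i t)^2 :=
    intervalIntegral.integral_nonneg (by norm_num) (fun u _ => sq_nonneg _)
  have hexp : ∫ t in (0:ℝ)..1, (G t - B * legendreScaling i t)^2
      = (∫ t in (0:ℝ)..1, (G t)^2) - (2*B)*B + B^2*1 := by
    have h1 : ∀ t : ℝ, (G t - B * legendreScaling i t)^2
        = (G t)^2 - (2*B)*(G t * legendreScaling i t)
          + B^2*(legendreScaling i t * legendreScaling i t) := fun t => by ring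
    simp only [h1]
    rw [intervalIntegral.integral_add (f := fun t => (G t)^2 - (2*B)*(G t * legendreScaling i t)) (g := fun t => B^2*(legendreScaling i t * legendreScaling i t)) (((hGc.pow 2).sub ((continuous_const.mul (hGc.mul hφc)))).intervalIntegrable _ _) ((continuous_const.mul (hφc.mul hφc)).intervalIntegrable _ _),
      intervalIntegral.integral_sub (f := fun t => (G t)^2) (g := fun t => (2*B)*(G t * legendreScaling i t)) hG2int ((continuous_const.mul (hGc.mul hφc)).intervalIntegrable _ _),
      intervalIntegral.integral_const_mul, intervalIntegral.integral_const_mul,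
      scaling_orthonormal]
    simp
    exact Or.inl rfl
  have hCS : B^2 ≤ ∫ t in (0:ℝ)..1, (G t)^2 := by
    rw [hexp] at hnn
    nlinarith
  have hBle : |B| ≤ Real.sqrt (∫ t in (0:ℝ)..1, (G t)^2) := by
    calc |B| = Real.sqrt (B^2) := (Real.sqrt_sq_eq_abs B).symm
    _ ≤ _ := Real.sqrt_le_sqrt hCS
  have hceq : (∫ t in (0:ℝ)..1, f t * legendreScaling i t) = -B/a := by
    field_simp
    linarith [hc]
  rw [hceq, abs_div, abs_neg, abs_of_pos ha]
  gcongr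


/-- uniform convergence on `[0,1]` of the Fourier–Legendre series of a
`C²` function with bounded second derivative. -/
theorem legendre_series_tendstoUniformlyOn (f : ℝ → ℝ) (K : ℝ)
    (hf : ContDiff ℝ 2 f)
    (hK : ∀ x ∈ Set.Icc (0:ℝ) 1, |iteratedDeriv 2 f x| ≤ K) :
    TendstoUniformlyOn (fun n x => legendrePartialSum n f x) f atTop
      (Set.Icc (0:ℝ) 1) := by
  obtain ⟨M, hM0, hM⟩ := coeff_bound f hf
  set c : ℕ → ℝ := fun i => ∫ t in (0:ℝ)..1, f t * legendreScaling i t with hcdef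
  set bnd : ℕ → ℝ := fun i =>
    if i = 0 then |c 0| else M * Real.sqrt (2*(i:ℝ)+1) / ((i:ℝ)*((i:ℝ)+1)) with hbnddef
  have hbnd0 : ∀ i, 0 ≤ bnd i := by
    intro i
    by_cases hi : i = 0
    · simp [hbnddef, hi]
    · simp only [hbnddef, if_neg hi]
      exact div_nonneg (mul_nonneg hM0 (Real.sqrt_nonneg _)) (by positivity)
  have hφ0 : ∀ x : ℝ, legendreScaling 0 x = 1 := by
    intro x
    simp [legendreScaling, legendreP, Real.sqrt_one]
  have hterm : ∀ i (x : ℝ), x ∈ Set.Icc (0:ℝ) 1 → ‖c i * legendreScaling i x‖ ≤ bnd i := by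
    intro i x hx
    by_cases hi : i = 0
    · subst hi
      simp [hφ0, hbnddef]
    · have hi1 : 1 ≤ i := Nat.one_le_iff_ne_zero.mpr hi
      rw [Real.norm_eq_abs, abs_mul]
      simp only [hbnddef, if_neg hi]
      calc |c i| * |legendreScaling i x|
          ≤ (M / ((i:ℝ)*((i:ℝ)+1))) * Real.sqrt (2*(i:ℝ)+1) :=
            mul_le_mul (hM i hi1) (scaling_bound i hx) (abs_nonneg _)
              (div_nonneg hM0 (by positivity))
        _ = M * Real.sqrt (2*(i:ℝ)+1) / ((i:ℝ)*((i:ℝ)+1)) := by ring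
  -- summability of the bound
  have hps : Summable (fun n : ℕ => ((n:ℝ)) ^ (-(3:ℝ)/2)) :=
    Real.summable_nat_rpow.mpr (by norm_num)
  have hps1 : Summable (fun n : ℕ => ((n:ℝ)+1) ^ (-(3:ℝ)/2)) := by
    have h1 := (summable_nat_add_iff 1).mpr hps
    refine h1.congr fun n => ?_
    push_cast
    rfl
  have hcomp : ∀ i : ℕ, bnd (i+1) ≤ (M * Real.sqrt 3) * (((i:ℝ)+1)^(-(3:ℝ)/2)) := by
    intro i
    have hge : (0:ℝ) ≤ (i:ℝ) := Nat.cast_nonneg i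
    have hxpos : (0:ℝ) < (i:ℝ)+1 := by positivity
    have hrw : ((i:ℝ)+1)^(-(3:ℝ)/2) = Real.sqrt ((i:ℝ)+1) / (((i:ℝ)+1)^2) := by
      rw [Real.sqrt_eq_rpow, ← Real.rpow_natCast ((i:ℝ)+1) 2, ← Real.rpow_sub hxpos]
      norm_num
    have hb : bnd (i+1) = M * Real.sqrt (2*((i:ℝ)+1)+1) / (((i:ℝ)+1)*((i:ℝ)+2)) := by
      simp only [hbnddef, if_neg (Nat.succ_ne_zero i)]
      push_cast
      ring_nf
    rw [hb, hrw]
    have hs1 : Real.sqrt (2*((i:ℝ)+1)+1) ≤ Real.sqrt 3 * Real.sqrt ((i:ℝ)+1) := by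
      rw [← Real.sqrt_mul (by norm_num)]
      apply Real.sqrt_le_sqrt
      nlinarith
    calc M * Real.sqrt (2*((i:ℝ)+1)+1) / (((i:ℝ)+1)*((i:ℝ)+2))
        ≤ M * (Real.sqrt 3 * Real.sqrt ((i:ℝ)+1)) / (((i:ℝ)+1)*((i:ℝ)+1)) := by
          apply div_le_div₀ (by positivity) (by nlinarith [Real.sqrt_nonneg ((i:ℝ)+1)])
            (by positivity) (by nlinarith)
      _ = M * Real.sqrt 3 * (Real.sqrt ((i:ℝ)+1) / (((i:ℝ)+1)^2)) := by ring
  have hsum : Summable bnd := by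
    rw [← summable_nat_add_iff 1]
    exact Summable.of_nonneg_of_le (fun i => hbnd0 (i+1)) hcomp (hps1.mul_left (M*Real.sqrt 3))
  have hmtest := tendstoUniformlyOn_tsum_nat (f := fun i x => c i * legendreScaling i x)
    (s := Set.Icc (0:ℝ) 1) hsum hterm
  set g : ℝ → ℝ := fun x => ∑' i, c i * legendreScaling i x with hgdef
  have hfc : Continuous f := hf.continuous
  have hScont : ∀ N : ℕ, Continuous (fun x => ∑ i ∈ Finset.range N, c i * legendreScaling i x) :=
    fun N => continuous_finset_sum _ (fun i _ => continuous_const.mul (scaling_continuous i))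
  have hgc : ContinuousOn g (Set.Icc 0 1) :=
    hmtest.continuousOn (Filter.Eventually.of_forall fun N => (hScont N).continuousOn).frequently
  have hsummandx : ∀ x, x ∈ Set.Icc (0:ℝ) 1 → Summable (fun i => c i * legendreScaling i x) :=
    fun x hx => Summable.of_norm
      (Summable.of_nonneg_of_le (fun i => norm_nonneg _) (fun i => hterm i x hx) hsum)
  set T : ℝ := ∑' i, bnd i with hTdef
  have hSbound : ∀ (N : ℕ) (x : ℝ), x ∈ Set.Icc (0:ℝ) 1 →
      |∑ i ∈ Finset.range N, c i * legendreScaling i x| ≤ T := by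
    intro N x hx
    calc |∑ i ∈ Finset.range N, c i * legendreScaling i x|
        ≤ ∑ i ∈ Finset.range N, |c i * legendreScaling i x| :=
          Finset.abs_sum_le_sum_abs _ _
      _ ≤ ∑ i ∈ Finset.range N, bnd i := Finset.sum_le_sum fun i _ => hterm i x hx
      _ ≤ T := Summable.sum_le_tsum _ (fun i _ => hbnd0 i) hsum
  have huIoc : Set.uIoc (0:ℝ) 1 ⊆ Set.Icc (0:ℝ) 1 := by
    rw [Set.uIoc_of_le (by norm_num : (0:ℝ) ≤ 1)]
    exact Set.Ioc_subset_Icc_self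
  -- the Fourier coefficients of g agree with those of f
  have hgcoeff : ∀ j, ∫ t in (0:ℝ)..1, g t * legendreScaling j t = c j := by
    intro j
    have hjc := scaling_continuous j
    have htend : Tendsto (fun N => ∫ t in (0:ℝ)..1,
        (∑ i ∈ Finset.range N, c i * legendreScaling i t) * legendreScaling j t) atTop
        (𝓝 (∫ t in (0:ℝ)..1, g t * legendreScaling j t)) := by
      apply intervalIntegral.tendsto_integral_filter_of_dominated_convergence
        (bound := fun _ => T * Real.sqrt (2*(j:ℝ)+1))
      · exact Filter.Eventually.of_forall fun N =>
          ((hScont N).mul hjc).aestronglyMeasurable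
      · refine Filter.Eventually.of_forall fun N => MeasureTheory.ae_of_all _ fun x hx => ?_
        have hx' : x ∈ Set.Icc (0:ℝ) 1 := huIoc hx
        rw [Real.norm_eq_abs, abs_mul]
        exact mul_le_mul (hSbound N x hx') (scaling_bound j hx') (abs_nonneg _)
          (le_trans (abs_nonneg _) (hSbound N x hx'))
      · exact intervalIntegrable_const
      · refine MeasureTheory.ae_of_all _ fun x hx => ?_
        have hx' : x ∈ Set.Icc (0:ℝ) 1 := huIoc hx
        exact ((hsummandx x hx').hasSum.tendsto_sum_nat).mul_const _
    have heval : ∀ᶠ N in atTop, (∫ t in (0:ℝ)..1,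
        (∑ i ∈ Finset.range N, c i * legendreScaling i t) * legendreScaling j t) = c j := by
      filter_upwards [Filter.eventually_ge_atTop (j+1)] with N hN
      have hstep : ∫ t in (0:ℝ)..1,
          (∑ i ∈ Finset.range N, c i * legendreScaling i t) * legendreScaling j t
          = ∑ i ∈ Finset.range N, c i * ∫ t in (0:ℝ)..1,
              legendreScaling i t * legendreScaling j t := by
        rw [intervalIntegral.integral_congr
          (g := fun t => ∑ i ∈ Finset.range N, c i * (legendreScaling i t * legendreScaling j t))
          (fun t _ => by rw [Finset.sum_mul]; exact Finset.sum_congr rfl fun i _ => by ring)]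
        rw [intervalIntegral.integral_finset_sum (f := fun i t => c i * (legendreScaling i t * legendreScaling j t))
          (fun i _ => (continuous_const.mul ((scaling_continuous i).mul hjc)).intervalIntegrable _ _)]
        exact Finset.sum_congr rfl fun i _ => intervalIntegral.integral_const_mul _ _
      rw [hstep]
      rw [Finset.sum_congr rfl (fun i _ => by rw [scaling_orthonormal i j])]
      simp only [mul_ite, mul_one, mul_zero]
      rw [Finset.sum_ite_eq' (Finset.range N) j c]
      rw [if_pos (Finset.mem_range.mpr (by omega))]
    have hconst : Tendsto (fun N => ∫ t in (0:ℝ)..1,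
        (∑ i ∈ Finset.range N, c i * legendreScaling i t) * legendreScaling j t) atTop
        (𝓝 (c j)) :=
      Tendsto.congr' (heval.mono fun N h => h.symm) tendsto_const_nhds
    exact tendsto_nhds_unique htend hconst
  -- h := f - g is orthogonal to everything
  set h : ℝ → ℝ := fun t => f t - g t with hhdef
  have hhc : ContinuousOn h (Set.Icc 0 1) := hfc.continuousOn.sub hgc
  have hIcc : Set.uIcc (0:ℝ) 1 = Set.Icc 0 1 := Set.uIcc_of_le (by norm_num)
  have hint_of_cont : ∀ {u : ℝ → ℝ}, ContinuousOn u (Set.Icc 0 1) →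
      IntervalIntegrable u MeasureTheory.volume 0 1 := by
    intro u hu
    apply ContinuousOn.intervalIntegrable
    rwa [hIcc]
  have hforth : ∀ j, ∫ t in (0:ℝ)..1, h t * legendreScaling j t = 0 := by
    intro j
    have hjc := scaling_continuous j
    have h1 : ∫ t in (0:ℝ)..1, h t * legendreScaling j t
        = (∫ t in (0:ℝ)..1, f t * legendreScaling j t)
          - ∫ t in (0:ℝ)..1, g t * legendreScaling j t := by
      rw [← intervalIntegral.integral_sub (f := fun t => f t * legendreScaling j t) (g := fun t => g t * legendreScaling j t) ((hfc.mul hjc).intervalIntegrable _ _)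
        (hint_of_cont (hgc.mul hjc.continuousOn))]
      apply intervalIntegral.integral_congr
      intro t _
      simp only [hhdef]
      ring
    rw [h1, hgcoeff]
    simp [hcdef]
  have hLorth : ∀ j, ∫ t in (0:ℝ)..1, h t * (legL j).eval (2*t-1) = 0 := by
    intro j
    have hs : Real.sqrt (2*(j:ℝ)+1) ≠ 0 := by positivity
    have h2 : ∫ t in (0:ℝ)..1, h t * legendreScaling j t
        = Real.sqrt (2*(j:ℝ)+1) * ∫ t in (0:ℝ)..1, h t * (legL j).eval (2*t-1) := by
      rw [← intervalIntegral.integral_const_mul]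
      apply intervalIntegral.integral_congr
      intro t _
      simp only [scaling_eq]
      ring
    have h3 := hforth j
    rw [h2] at h3
    exact (mul_eq_zero.mp h3).resolve_left hs
  have haff : Continuous (fun t : ℝ => 2*t-1) :=
    (continuous_const.mul continuous_id).sub continuous_const
  have hpolyc : ∀ p : Polynomial ℝ, Continuous (fun t : ℝ => p.eval (2*t-1)) :=
    fun p => p.continuous_aeval.comp haff
  have hpoly : ∀ p : Polynomial ℝ, ∫ t in (0:ℝ)..1, h t * p.eval (2*t-1) = 0 := by
    have key : ∀ N : ℕ, ∀ p : Polynomial ℝ, p.natDegree ≤ N →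
        ∫ t in (0:ℝ)..1, h t * p.eval (2*t-1) = 0 := by
      intro N
      induction N with
      | zero =>
        intro p hp
        rw [Polynomial.eq_C_of_natDegree_le_zero hp]
        have h0 := hLorth 0
        simp only [legL, Polynomial.eval_one, mul_one] at h0
        have : ∫ t in (0:ℝ)..1, h t * (Polynomial.C (p.coeff 0)).eval (2*t-1)
            = (p.coeff 0) * ∫ t in (0:ℝ)..1, h t := by
          rw [← intervalIntegral.integral_const_mul]
          apply intervalIntegral.integral_congr
          intro t _
          simp [eval_C]
          ring
        rw [this, h0, mul_zero]
      | succ N ih =>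
        intro p hp
        have hlc : (legL (N+1)).coeff (N+1) ≠ 0 := ne_of_gt (legL_coeff_deg (N+1)).1
        set d : ℝ := p.coeff (N+1) / (legL (N+1)).coeff (N+1) with hddef
        set q : Polynomial ℝ := p - C d * legL (N+1) with hqdef
        have hqdeg : q.natDegree ≤ N := by
          apply Polynomial.natDegree_le_iff_coeff_eq_zero.mpr
          intro m hm
          by_cases hm1 : m = N+1
          · subst hm1
            simp only [hqdef, Polynomial.coeff_sub, Polynomial.coeff_C_mul, hddef]
            rw [div_mul_cancel₀ _ hlc]
            ring
          · have hmN : N+1 < m := by omega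
            have hz1 : p.coeff m = 0 :=
              Polynomial.coeff_eq_zero_of_natDegree_lt (lt_of_le_of_lt hp hmN)
            have hz2 : (legL (N+1)).coeff m = 0 := by
              apply Polynomial.coeff_eq_zero_of_natDegree_lt
              rw [(legL_coeff_deg (N+1)).2]
              omega
            simp [hqdef, Polynomial.coeff_sub, Polynomial.coeff_C_mul, hz1, hz2]
        have hq0 := ih q hqdeg
        have hL0 := hLorth (N+1)
        have hpeq : p = q + C d * legL (N+1) := by rw [hqdef]; ring
        rw [hpeq]
        have hsplit : ∫ t in (0:ℝ)..1, h t * (q + C d * legL (N+1)).eval (2*t-1)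
            = (∫ t in (0:ℝ)..1, h t * q.eval (2*t-1))
              + d * ∫ t in (0:ℝ)..1, h t * (legL (N+1)).eval (2*t-1) := by
          rw [← intervalIntegral.integral_const_mul,
            ← intervalIntegral.integral_add (f := fun t => h t * q.eval (2*t-1)) (g := fun t => d * (h t * (legL (N+1)).eval (2*t-1))) (hint_of_cont (hhc.mul (hpolyc q).continuousOn))
              (by
                apply IntervalIntegrable.const_mul
                exact hint_of_cont (hhc.mul (hpolyc (legL (N+1))).continuousOn))]
          apply intervalIntegral.integral_congr
          intro t _
          simp only [eval_add, eval_mul, eval_C]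
          ring
        rw [hsplit, hq0, hL0]
        ring
    intro p
    exact key p.natDegree p le_rfl
  -- L² norm of h vanishes
  have hh2nonneg : 0 ≤ ∫ t in (0:ℝ)..1, (h t)^2 :=
    intervalIntegral.integral_nonneg (by norm_num) fun u _ => sq_nonneg _
  set C0 : ℝ := ∫ t in (0:ℝ)..1, |h t| with hC0def
  have hC0nn : 0 ≤ C0 :=
    intervalIntegral.integral_nonneg (by norm_num) fun u _ => abs_nonneg _
  have hbound : ∀ ε : ℝ, 0 < ε → (∫ t in (0:ℝ)..1, (h t)^2) ≤ ε * C0 := by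
    intro ε hε
    obtain ⟨p, hp⟩ := exists_polynomial_near_of_continuousOn 0 1 h hhc ε hε
    set r : Polynomial ℝ := p.comp (C (1/2 : ℝ) * (X + 1)) with hrdef
    have hr : ∀ t : ℝ, r.eval (2*t-1) = p.eval t := by
      intro t
      rw [hrdef, Polynomial.eval_comp]
      congr 1
      simp only [eval_mul, eval_add, eval_C, eval_X, eval_one]
      ring
    have h3 : ∫ t in (0:ℝ)..1, h t * r.eval (2*t-1) = 0 := hpoly r
    have h4 : (∫ t in (0:ℝ)..1, (h t)^2) = ∫ t in (0:ℝ)..1, h t * (h t - p.eval t) := by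
      have h5 : ∫ t in (0:ℝ)..1, h t * (h t - p.eval t)
          = (∫ t in (0:ℝ)..1, (h t)^2) - ∫ t in (0:ℝ)..1, h t * r.eval (2*t-1) := by
        rw [← intervalIntegral.integral_sub (f := fun t => (h t)^2) (g := fun t => h t * r.eval (2*t-1)) (hint_of_cont (hhc.pow 2))
          (hint_of_cont (hhc.mul (hpolyc r).continuousOn))]
        apply intervalIntegral.integral_congr
        intro t _
        simp only [hr]
        ring
      rw [h5, h3, sub_zero]
    rw [h4]
    calc ∫ t in (0:ℝ)..1, h t * (h t - p.eval t)
        ≤ ∫ t in (0:ℝ)..1, |h t| * ε := by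
          apply intervalIntegral.integral_mono_on (by norm_num)
            (hint_of_cont (hhc.mul (hhc.sub (p.continuous_aeval.continuousOn))))
            (hint_of_cont ((hhc.abs).mul continuousOn_const))
          intro x hx
          have h5 : |p.eval x - h x| < ε := hp x hx
          calc h x * (h x - p.eval x) ≤ |h x * (h x - p.eval x)| := le_abs_self _
            _ = |h x| * |h x - p.eval x| := abs_mul _ _
            _ ≤ |h x| * ε := by
                apply mul_le_mul_of_nonneg_left _ (abs_nonneg _)
                rw [abs_sub_comm]
                exact le_of_lt h5
      _ = ε * C0 := by
          rw [intervalIntegral.integral_mul_const]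
          ring
  have hL2 : (∫ t in (0:ℝ)..1, (h t)^2) = 0 := by
    by_contra hne
    have hpos : 0 < ∫ t in (0:ℝ)..1, (h t)^2 := lt_of_le_of_ne hh2nonneg (Ne.symm hne)
    have hb := hbound ((∫ t in (0:ℝ)..1, (h t)^2)/(2*(C0+1))) (by positivity)
    have hq : (∫ t in (0:ℝ)..1, (h t)^2)/(2*(C0+1)) * C0 < ∫ t in (0:ℝ)..1, (h t)^2 := by
      rw [div_mul_eq_mul_div, div_lt_iff₀ (by positivity)]
      nlinarith [mul_pos hpos (show (0:ℝ) < C0 + 2 by linarith)]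
    linarith
  have hzero : Set.EqOn g f (Set.Icc (0:ℝ) 1) := by
    intro x hx
    by_contra hne
    have hne' : h x ≠ 0 := by
      simp only [hhdef]
      exact sub_ne_zero.mpr (fun hfg => hne hfg.symm)
    have h6 : 0 < ∫ t in (0:ℝ)..1, (h t)^2 := by
      apply intervalIntegral.integral_pos (by norm_num)
      · exact hhc.pow 2
      · intro t _
        exact sq_nonneg _
      · refine ⟨x, hx, ?_⟩
        rcases hne'.lt_or_gt with hl | hl
        · nlinarith
        · nlinarith
    rw [hL2] at h6
    exact absurd h6 (lt_irrefl 0)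
  have final := hmtest.congr_right hzero
  have hforms : (fun n x => legendrePartialSum n f x)
      = (fun N x => ∑ i ∈ Finset.range N, c i * legendreScaling i x) := by
    funext n x
    simp only [legendrePartialSum, hcdef]
  rw [hforms]
  exact final
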